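/- The relation of being ω⃗-limitedly distant is an equivalence relation on the set of sequences ℕ → X. (Hence the hypernodes are partitioned into nodal ω⃗-galaxies, Section 3.) -/

import Mathlib

open Filter Ordinal
open scoped Ordinal

universe u

namespace Ordinal

/-- Natural (Hessenberg) sum of ordinals, as defined in the Mathlib of December 2024
(`Ordinal.nadd`, since removed from Mathlib). -/
noncomputable def nadd (a b : Ordinal.{u}) : Ordinal.{u} :=
  max (⨆ x : Set.Iio a, Order.succ (nadd x.1 b)) (⨆ x : Set.Iio b, Order.succ (nadd a x.1))
termination_by (a, b)
decreasing_by all_goals cases x; decreasing_tactic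

end Ordinal

infixl:65 " ♯ " => Ordinal.nadd

namespace Ordinal

lemma nadd_def' (a b : Ordinal.{u}) : a ♯ b =
    max (⨆ x : Set.Iio a, Order.succ (x.1 ♯ b)) (⨆ x : Set.Iio b, Order.succ (a ♯ x.1)) := by
  rw [nadd]

lemma nadd_lt_nadd_right {a b : Ordinal.{u}} (h : a < b) (c : Ordinal.{u}) : a ♯ c < b ♯ c := by
  rw [nadd_def' b c]
  refine lt_of_lt_of_le (Order.lt_succ (a ♯ c)) (le_trans ?_ (le_max_left _ _))
  exact le_ciSup (f := fun x : Set.Iio b => Order.succ (x.1 ♯ c)) bddAbove_of_small ⟨a, h⟩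

lemma nadd_lt_nadd_left {b c : Ordinal.{u}} (h : b < c) (a : Ordinal.{u}) : a ♯ b < a ♯ c := by
  rw [nadd_def' a c]
  refine lt_of_lt_of_le (Order.lt_succ (a ♯ b)) (le_trans ?_ (le_max_right _ _))
  exact le_ciSup (f := fun x : Set.Iio c => Order.succ (a ♯ x.1)) bddAbove_of_small ⟨b, h⟩

lemma nadd_le_iff {a b c : Ordinal.{u}} :
    a ♯ b ≤ c ↔ (∀ a' < a, a' ♯ b < c) ∧ (∀ b' < b, a ♯ b' < c) := by
  constructor
  · intro h
    exact ⟨fun a' ha => (nadd_lt_nadd_right ha b).trans_le h,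
      fun b' hb => (nadd_lt_nadd_left hb a).trans_le h⟩
  · rintro ⟨h1, h2⟩
    rw [nadd_def']
    exact max_le (ciSup_le' fun x => Order.succ_le_of_lt (h1 _ x.2))
      (ciSup_le' fun x => Order.succ_le_of_lt (h2 _ x.2))

lemma nadd_zero (a : Ordinal.{u}) : a ♯ 0 = a := by
  induction a using Ordinal.induction with
  | h a IH =>
  apply le_antisymm
  · rw [nadd_le_iff]
    refine ⟨fun a' ha => by rw [IH a' ha]; exact ha, fun b' hb => by simp at hb⟩
  · refine le_of_not_gt fun h => ?_
    have := nadd_lt_nadd_right h 0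
    rw [IH _ h] at this
    exact lt_irrefl _ this

lemma nadd_le_nadd {a b c d : Ordinal.{u}} (h1 : a ≤ b) (h2 : c ≤ d) : a ♯ c ≤ b ♯ d := by
  have e1 : a ♯ c ≤ b ♯ c := by
    rcases h1.lt_or_eq with h | rfl
    · exact (nadd_lt_nadd_right h c).le
    · exact le_rfl
  have e2 : b ♯ c ≤ b ♯ d := by
    rcases h2.lt_or_eq with h | rfl
    · exact (nadd_lt_nadd_left h b).le
    · exact le_rfl
  exact e1.trans e2

end Ordinal

private lemma nadd_key (n : ℕ)
    (hG : ∀ x y : Ordinal.{u}, x < ω ^ (n : Ordinal) → y < ω ^ (n : Ordinal) →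
      x ♯ y < ω ^ (n : Ordinal)) :
    ∀ a b : Ordinal.{u}, ∀ q s : ℕ, ∀ r t : Ordinal,
      r < ω ^ (n : Ordinal) → t < ω ^ (n : Ordinal) →
      a = ω ^ (n : Ordinal) * q + r → b = ω ^ (n : Ordinal) * s + t →
      a ♯ b ≤ ω ^ (n : Ordinal) * ((q + s : ℕ) : Ordinal) + (r ♯ t) := by
  intro a
  induction a using Ordinal.induction with
  | h a IHa =>
  intro b
  induction b using Ordinal.induction with
  | h b IHb =>
  intro q s r t hr ht ha hb
  have hW0 : (ω : Ordinal) ^ (n : Ordinal) ≠ 0 := (opow_pos _ omega0_pos).ne'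
  rw [Ordinal.nadd_le_iff]
  constructor
  · intro a' ha'
    -- decompose a'
    have hdiv : a' / ω ^ (n : Ordinal) < ((q + 1 : ℕ) : Ordinal) := by
      rw [Ordinal.div_lt hW0]
      calc a' < a := ha'
        _ = ω ^ (n : Ordinal) * q + r := ha
        _ < ω ^ (n : Ordinal) * q + ω ^ (n : Ordinal) := add_lt_add_right hr _
        _ = ω ^ (n : Ordinal) * ((q + 1 : ℕ) : Ordinal) := by push_cast; simp [mul_add, Ordinal.mul_succ, add_assoc]
    obtain ⟨q', hq'⟩ := Ordinal.lt_omega0.1 (hdiv.trans (nat_lt_omega0 _))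
    have hq'le : q' ≤ q := by
      have := hq' ▸ hdiv
      exact Nat.lt_succ_iff.1 (by exact_mod_cast this)
    have hr' : a' % ω ^ (n : Ordinal) < ω ^ (n : Ordinal) := Ordinal.mod_lt a' hW0
    have ha'' : a' = ω ^ (n : Ordinal) * (q' : Ordinal) + a' % ω ^ (n : Ordinal) := by
      rw [← hq', Ordinal.div_add_mod]
    have IH := IHa a' ha' b q' s _ t hr' ht ha'' hb
    rcases lt_or_eq_of_le hq'le with hlt | rfl
    · calc a' ♯ b ≤ ω ^ (n : Ordinal) * ((q' + s : ℕ) : Ordinal) + (a' % ω ^ (n : Ordinal) ♯ t) :=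
            IH
        _ < ω ^ (n : Ordinal) * ((q' + s : ℕ) : Ordinal) + ω ^ (n : Ordinal) :=
            add_lt_add_right (hG _ _ hr' ht) _
        _ = ω ^ (n : Ordinal) * ((q' + s + 1 : ℕ) : Ordinal) := by push_cast; simp [mul_add, Ordinal.mul_succ, add_assoc]
        _ ≤ ω ^ (n : Ordinal) * ((q + s : ℕ) : Ordinal) := by
            apply mul_le_mul_right
            exact_mod_cast Nat.succ_le_of_lt (by omega)
        _ ≤ ω ^ (n : Ordinal) * ((q + s : ℕ) : Ordinal) + (r ♯ t) := le_self_add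
    · -- q' = q, so remainder decreased
      have hrr : a' % ω ^ (n : Ordinal) < r := by
        have := ha'' ▸ ha'
        rw [ha] at this
        exact (add_lt_add_iff_left _).1 this
      calc a' ♯ b ≤ ω ^ (n : Ordinal) * ((q' + s : ℕ) : Ordinal) + (a' % ω ^ (n : Ordinal) ♯ t) :=
            IH
        _ < ω ^ (n : Ordinal) * ((q' + s : ℕ) : Ordinal) + (r ♯ t) :=
            add_lt_add_right (Ordinal.nadd_lt_nadd_right hrr t) _
  · intro b' hb'
    have hdiv : b' / ω ^ (n : Ordinal) < ((s + 1 : ℕ) : Ordinal) := by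
      rw [Ordinal.div_lt hW0]
      calc b' < b := hb'
        _ = ω ^ (n : Ordinal) * s + t := hb
        _ < ω ^ (n : Ordinal) * s + ω ^ (n : Ordinal) := add_lt_add_right ht _
        _ = ω ^ (n : Ordinal) * ((s + 1 : ℕ) : Ordinal) := by push_cast; simp [mul_add, Ordinal.mul_succ, add_assoc]
    obtain ⟨s', hs'⟩ := Ordinal.lt_omega0.1 (hdiv.trans (nat_lt_omega0 _))
    have hs'le : s' ≤ s := by
      have := hs' ▸ hdiv
      exact Nat.lt_succ_iff.1 (by exact_mod_cast this)
    have ht' : b' % ω ^ (n : Ordinal) < ω ^ (n : Ordinal) := Ordinal.mod_lt b' hW0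
    have hb'' : b' = ω ^ (n : Ordinal) * (s' : Ordinal) + b' % ω ^ (n : Ordinal) := by
      rw [← hs', Ordinal.div_add_mod]
    have IH := IHb b' hb' q s' r _ hr ht' ha hb''
    rcases lt_or_eq_of_le hs'le with hlt | rfl
    · calc a ♯ b' ≤ ω ^ (n : Ordinal) * ((q + s' : ℕ) : Ordinal) + (r ♯ b' % ω ^ (n : Ordinal)) :=
            IH
        _ < ω ^ (n : Ordinal) * ((q + s' : ℕ) : Ordinal) + ω ^ (n : Ordinal) :=
            add_lt_add_right (hG _ _ hr ht') _
        _ = ω ^ (n : Ordinal) * ((q + s' + 1 : ℕ) : Ordinal) := by push_cast; simp [mul_add, Ordinal.mul_succ, add_assoc]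
        _ ≤ ω ^ (n : Ordinal) * ((q + s : ℕ) : Ordinal) := by
            apply mul_le_mul_right
            exact_mod_cast Nat.succ_le_of_lt (by omega)
        _ ≤ ω ^ (n : Ordinal) * ((q + s : ℕ) : Ordinal) + (r ♯ t) := le_self_add
    · have htt : b' % ω ^ (n : Ordinal) < t := by
        have := hb'' ▸ hb'
        rw [hb] at this
        exact (add_lt_add_iff_left _).1 this
      calc a ♯ b' ≤ ω ^ (n : Ordinal) * ((q + s' : ℕ) : Ordinal) + (r ♯ b' % ω ^ (n : Ordinal)) :=
            IH
        _ < ω ^ (n : Ordinal) * ((q + s' : ℕ) : Ordinal) + (r ♯ t) :=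
            add_lt_add_right (Ordinal.nadd_lt_nadd_left htt r) _

private lemma nadd_lt_opow_nat (n : ℕ) :
    ∀ x y : Ordinal, x < ω ^ (n : Ordinal) → y < ω ^ (n : Ordinal) →
      x ♯ y < ω ^ (n : Ordinal) := by
  induction n with
  | zero =>
    intro x y hx hy
    simp only [Nat.cast_zero, opow_zero, Ordinal.lt_one_iff_zero] at *
    rw [hx, hy, Ordinal.nadd_zero]
  | succ n IH =>
    intro x y hx hy
    have hW0 : (ω : Ordinal) ^ (n : Ordinal) ≠ 0 := (opow_pos _ omega0_pos).ne'
    have hsplit : (ω : Ordinal) ^ ((n + 1 : ℕ) : Ordinal) = ω ^ (n : Ordinal) * ω := by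
      push_cast
      rw [opow_add, opow_one]
    rw [hsplit] at hx hy ⊢
    obtain ⟨q, hq⟩ := Ordinal.lt_omega0.1 ((Ordinal.div_lt hW0).2 hx)
    obtain ⟨s, hs⟩ := Ordinal.lt_omega0.1 ((Ordinal.div_lt hW0).2 hy)
    have hxd : x = ω ^ (n : Ordinal) * (q : Ordinal) + x % ω ^ (n : Ordinal) := by
      rw [← hq, Ordinal.div_add_mod]
    have hyd : y = ω ^ (n : Ordinal) * (s : Ordinal) + y % ω ^ (n : Ordinal) := by
      rw [← hs, Ordinal.div_add_mod]
    have key := nadd_key n IH x y q s _ _ (Ordinal.mod_lt x hW0) (Ordinal.mod_lt y hW0) hxd hyd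
    calc x ♯ y ≤ ω ^ (n : Ordinal) * ((q + s : ℕ) : Ordinal) + (x % ω ^ (n : Ordinal) ♯ y % ω ^ (n : Ordinal)) := key
      _ < ω ^ (n : Ordinal) * ((q + s : ℕ) : Ordinal) + ω ^ (n : Ordinal) :=
          add_lt_add_right (IH _ _ (Ordinal.mod_lt x hW0) (Ordinal.mod_lt y hW0)) _
      _ = ω ^ (n : Ordinal) * ((q + s + 1 : ℕ) : Ordinal) := by push_cast; simp [mul_add, Ordinal.mul_succ, add_assoc]
      _ < ω ^ (n : Ordinal) * ω :=
          (mul_lt_mul_iff_right₀ (opow_pos _ omega0_pos)).2 (nat_lt_omega0 _)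

/-- Sequences `x, y : ℕ → X` are `ω⃗`-limitedly distant if there exists `μ ∈ ℕ` with
`{n : d (x n) (y n) ≤ ω^μ} ∈ F`. -/
def ArrowOmegaLimitedlyDistant {X : Type*} (d : X → X → Ordinal) (F : Ultrafilter ℕ)
    (x y : ℕ → X) : Prop :=
  ∃ μ : ℕ, {n : ℕ | d (x n) (y n) ≤ ω ^ (μ : Ordinal)} ∈ F

theorem arrowOmegaLimitedlyDistant_equivalence
    (X : Type*) (d : X → X → Ordinal)
    (hd0 : ∀ a b : X, d a b = 0 ↔ a = b)
    (hdsymm : ∀ a b : X, d a b = d b a)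
    (hdtri : ∀ a b c : X, d a c ≤ d a b ♯ d b c)
    (F : Ultrafilter ℕ) (hF : ∀ s : Set ℕ, sᶜ.Finite → s ∈ F) :
    (∀ x : ℕ → X, ArrowOmegaLimitedlyDistant d F x x) ∧
    (∀ x y : ℕ → X, ArrowOmegaLimitedlyDistant d F x y → ArrowOmegaLimitedlyDistant d F y x) ∧
    (∀ x y z : ℕ → X, ArrowOmegaLimitedlyDistant d F x y → ArrowOmegaLimitedlyDistant d F y z →
      ArrowOmegaLimitedlyDistant d F x z) := by
  refine ⟨?_, ?_, ?_⟩
  · intro x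
    refine ⟨0, ?_⟩
    have : {n : ℕ | d (x n) (x n) ≤ ω ^ ((0 : ℕ) : Ordinal)} = Set.univ :=
      Set.eq_univ_of_forall fun n => by
        simp only [Set.mem_setOf_eq, (hd0 (x n) (x n)).2 rfl]
        exact zero_le
    rw [this]
    exact Filter.univ_mem
  · rintro x y ⟨μ, hμ⟩
    refine ⟨μ, ?_⟩
    have : {n : ℕ | d (y n) (x n) ≤ ω ^ (μ : Ordinal)}
        = {n : ℕ | d (x n) (y n) ≤ ω ^ (μ : Ordinal)} := by
      ext n; simp only [Set.mem_setOf_eq, hdsymm]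
    rw [this]
    exact hμ
  · rintro x y z ⟨μ, hμ⟩ ⟨ν, hν⟩
    refine ⟨max μ ν + 1, ?_⟩
    filter_upwards [hμ, hν] with n h1 h2
    have hμlt : (ω : Ordinal) ^ (μ : Ordinal) < ω ^ ((max μ ν + 1 : ℕ) : Ordinal) := by
      rw [opow_lt_opow_iff_right one_lt_omega0]
      exact_mod_cast Nat.lt_succ_of_le (le_max_left μ ν)
    have hνlt : (ω : Ordinal) ^ (ν : Ordinal) < ω ^ ((max μ ν + 1 : ℕ) : Ordinal) := by
      rw [opow_lt_opow_iff_right one_lt_omega0]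
      exact_mod_cast Nat.lt_succ_of_le (le_max_right μ ν)
    calc d (x n) (z n) ≤ d (x n) (y n) ♯ d (y n) (z n) := hdtri _ _ _
      _ ≤ ω ^ (μ : Ordinal) ♯ ω ^ (ν : Ordinal) := Ordinal.nadd_le_nadd h1 h2
      _ ≤ ω ^ ((max μ ν + 1 : ℕ) : Ordinal) :=
          (nadd_lt_opow_nat (max μ ν + 1) _ _ hμlt hνlt).le
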